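/- Let A be a commutative ring that is an integral domain whose fraction field is formally real (i.e., -1 is not a sum of squares in Frac(A)). Let B be an A-algebra such that for every real closed field R, every ring homomorphism A → R lifts (extends along A → B) to a ring homomorphism B → R. Then the structure morphism A → B is injective. -/

import Mathlib

/-- A real closed field: an ordered field in which every nonnegative element is a
square and every odd-degree polynomial has a root. -/
class IsRealClosedField (R : Type) [Field R] [LinearOrder R] [IsStrictOrderedRing R] : Prop where
  isSquare_of_nonneg : ∀ x : R, 0 ≤ x → IsSquare x
  exists_root_of_odd : ∀ p : Polynomial R, Odd p.natDegree → ∃ x : R, p.eval x = 0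

set_option linter.unusedSectionVars false
set_option linter.unusedVariables false

namespace Stmt0Aux

section CommRing
variable {F : Type*} [CommRing F]

theorem sq_mul_isSumSq {a : F} (x : F) (h : IsSumSq a) : IsSumSq (x * x * a) := by
  induction h with
  | zero => simpa using IsSumSq.zero
  | @sq_add b S _ ih =>
    have : x * x * (b * b + S) = (x * b) * (x * b) + x * x * S := by ring
    rw [this]
    exact IsSumSq.sq_add _ ih

theorem isSumSq_mul {a b : F} (ha : IsSumSq a) (hb : IsSumSq b) : IsSumSq (a * b) := by
  induction ha with
  | zero => simpa using IsSumSq.zero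
  | @sq_add c S _ ih =>
    have : (c * c + S) * b = c * c * b + S * b := by ring
    rw [this]
    exact (sq_mul_isSumSq c hb).add ih

theorem isSumSq_map {L : Type*} [CommRing L] (f : F →+* L) {x : F} (h : IsSumSq x) :
    IsSumSq (f x) := by
  induction h with
  | zero => simpa using IsSumSq.zero
  | @sq_add a S _ ih => rw [map_add, map_mul]; exact IsSumSq.sq_add _ ih

theorem isSumSq_multiset_sum (l : Multiset F) : IsSumSq ((l.map fun x => x * x).sum) := by
  induction l using Multiset.induction with
  | empty => simpa using IsSumSq.zero
  | cons a t ih => simpa using IsSumSq.sq_add a ih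

theorem isSumSq_iff_multiset {s : F} :
    IsSumSq s ↔ ∃ l : Multiset F, (l.map fun x => x * x).sum = s := by
  constructor
  · intro h
    induction h with
    | zero => exact ⟨0, by simp⟩
    | @sq_add a S _ ih =>
      obtain ⟨l, hl⟩ := ih
      exact ⟨a ::ₘ l, by simp [hl]⟩
  · rintro ⟨l, rfl⟩
    exact isSumSq_multiset_sum l

end CommRing

section Field
variable {F : Type*} [Field F] (hF : ¬ IsSumSq (-1 : F))
include hF

theorem one_add_ne_zero {p : F} (hp : IsSumSq p) : 1 + p ≠ 0 := by
  intro h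
  exact hF (by rw [show (-1 : F) = p by linear_combination -h]; exact hp)

theorem add_eq_zero_false {x y : F} (hx : IsSumSq x) (hy : IsSumSq y) (h : x + y = 0)
    (hx0 : x ≠ 0) : False := by
  apply hF
  have hy' : y = -x := by linear_combination h
  have : (-1 : F) = (y * x) * (x⁻¹ * x⁻¹) := by
    rw [hy']
    field_simp
  rw [this, mul_comm]
  exact sq_mul_isSumSq _ (isSumSq_mul hy hx)

theorem sq_multiset_sum_ne_zero {l : Multiset F} {x : F} (hx : x ∈ l) (hx0 : x ≠ 0) :
    (l.map fun x => x * x).sum ≠ 0 := by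
  obtain ⟨t, rfl⟩ := Multiset.exists_cons_of_mem hx
  intro h
  simp only [Multiset.map_cons, Multiset.sum_cons] at h
  exact add_eq_zero_false hF (by simpa using IsSumSq.sq_add x IsSumSq.zero)
    (isSumSq_multiset_sum t) h (by simpa using hx0)


end Field

section Max
variable {K Ω : Type*} [Field K] [Field Ω] [Algebra K Ω]

theorem isSumSq_of_multiset_mem (M : IntermediateField K Ω) (l : Multiset Ω) :
    (∀ x ∈ l, x ∈ M) → ∀ s : ↥M, (l.map fun x => x * x).sum = (s : Ω) → IsSumSq s := by
  induction l using Multiset.induction with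
  | empty =>
    intro _ s hs
    have : s = 0 := by
      have : ((0 : ↥M) : Ω) = (s : Ω) := by simpa using hs
      exact_mod_cast this.symm
    rw [this]; exact IsSumSq.zero
  | cons a t ih =>
    intro hmem s hs
    have ha : a ∈ M := hmem a (Multiset.mem_cons_self a t)
    set a' : ↥M := ⟨a, ha⟩ with ha'
    have hsum : (t.map fun x => x * x).sum = ((s - a' * a' : ↥M) : Ω) := by
      push_cast
      simp only [Multiset.map_cons, Multiset.sum_cons] at hs
      linear_combination hs
    have h1 : IsSumSq (s - a' * a') :=
      ih (fun x hx => hmem x (Multiset.mem_cons_of_mem hx)) _ hsum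
    have : s = a' * a' + (s - a' * a') := by ring
    rw [this]
    exact IsSumSq.sq_add _ h1

theorem exists_common_chain_mem (c : Set (IntermediateField K Ω)) (hc : IsChain (· ≤ ·) c)
    {N₀ : IntermediateField K Ω} (hN₀ : N₀ ∈ c) (l : Multiset Ω) :
    (∀ x ∈ l, ∃ N ∈ c, x ∈ N) → ∃ N ∈ c, ∀ x ∈ l, x ∈ N := by
  induction l using Multiset.induction with
  | empty => exact fun _ => ⟨N₀, hN₀, by simp⟩
  | cons a t ih =>
    intro hmem
    obtain ⟨N₁, hN₁, hN₁t⟩ := ih fun x hx => hmem x (Multiset.mem_cons_of_mem hx)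
    obtain ⟨Na, hNa, hNaa⟩ := hmem a (Multiset.mem_cons_self a t)
    rcases hc.total hNa hN₁ with h | h
    · exact ⟨N₁, hN₁, fun x hx => by
        rcases Multiset.mem_cons.mp hx with rfl | hx
        · exact h hNaa
        · exact hN₁t x hx⟩
    · exact ⟨Na, hNa, fun x hx => by
        rcases Multiset.mem_cons.mp hx with rfl | hx
        · exact hNaa
        · exact h (hN₁t x hx)⟩

theorem exists_max_real (hK : ¬ IsSumSq (-1 : K)) :
    ∃ M : IntermediateField K Ω, (¬ IsSumSq (-1 : ↥M)) ∧
      ∀ N : IntermediateField K Ω, (¬ IsSumSq (-1 : ↥N)) → M ≤ N → N = M := by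
  have hbot : ¬ IsSumSq (-1 : ↥(⊥ : IntermediateField K Ω)) := by
    intro h
    apply hK
    have := isSumSq_map ((IntermediateField.botEquiv K Ω : (⊥ : IntermediateField K Ω) ≃ₐ[K] K) :
      (⊥ : IntermediateField K Ω) →+* K) h
    simpa using this
  have hchain : ∀ c ⊆ {N : IntermediateField K Ω | ¬ IsSumSq (-1 : ↥N)},
      IsChain (· ≤ ·) c → ∀ y ∈ c,
      ∃ ub ∈ {N : IntermediateField K Ω | ¬ IsSumSq (-1 : ↥N)}, ∀ z ∈ c, z ≤ ub := by
    intro c hcs hc y hy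
    refine ⟨sSup c, ?_, fun z hz => le_sSup hz⟩
    intro h
    obtain ⟨l, hl⟩ := Stmt0Aux.isSumSq_iff_multiset.mp h
    have coe_sq_sum : ∀ (M' : IntermediateField K Ω) (t : Multiset ↥M') (s : ↥M'),
        (t.map fun x => x * x).sum = s →
        (((t.map fun x : ↥M' => (x : Ω)).map fun x => x * x).sum = (s : Ω)) := by
      intro M' t
      induction t using Multiset.induction with
      | empty => intro s hs; simp only [Multiset.map_zero, Multiset.sum_zero] at hs ⊢
                 rw [← hs]; push_cast; ring
      | cons a t ih =>
        intro s hs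
        simp only [Multiset.map_cons, Multiset.sum_cons] at hs ⊢
        rw [ih _ rfl, ← hs]
        push_cast; ring
    have hLsum : (((l.map fun x : ↥(sSup c) => (x : Ω)).map fun x => x * x).sum = (-1 : Ω)) := by
      rw [coe_sq_sum _ _ _ hl]; push_cast; ring
    haveI : Nonempty c := ⟨⟨y, hy⟩⟩
    have hdir : Directed (· ≤ ·) (fun i : c => (i : IntermediateField K Ω)) := hc.directed
    have hLmem : ∀ x ∈ (l.map fun x : ↥(sSup c) => (x : Ω)), ∃ N ∈ c, x ∈ N := by
      intro x hx
      obtain ⟨x', -, hxe⟩ := Multiset.mem_map.mp hx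
      have hx' : x ∈ sSup c := hxe ▸ x'.2
      rw [sSup_eq_iSup', ← SetLike.mem_coe,
        IntermediateField.coe_iSup_of_directed hdir, Set.mem_iUnion] at hx'
      obtain ⟨⟨N, hN⟩, hxN⟩ := hx'
      exact ⟨N, hN, hxN⟩
    obtain ⟨N, hNc, hNall⟩ := exists_common_chain_mem c hc hy _ hLmem
    apply hcs hNc
    apply isSumSq_of_multiset_mem N _ hNall (-1 : ↥N)
    rw [hLsum]; push_cast; ring
  obtain ⟨M, -, hM, hmax⟩ := zorn_le_nonempty₀
    {N : IntermediateField K Ω | ¬ IsSumSq (-1 : ↥N)} hchain ⊥ hbot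
  exact ⟨M, hM, fun N hN hMN => le_antisymm (hmax hN hMN) hMN⟩

end Max

section PolyHelpers
open Polynomial
variable {F : Type*} [CommRing F]

theorem natDegree_multiset_sum_le' (l : Multiset (Polynomial F)) (m : ℕ)
    (h : ∀ q ∈ l, q.natDegree ≤ m) : l.sum.natDegree ≤ m := by
  induction l using Multiset.induction with
  | empty => simp
  | cons a t ih =>
    rw [Multiset.sum_cons]
    exact le_trans (natDegree_add_le a t.sum)
      (max_le (h a (Multiset.mem_cons_self a t))
        (ih fun q hq => h q (Multiset.mem_cons_of_mem hq)))

theorem coeff_multiset_sum' (l : Multiset (Polynomial F)) (k : ℕ) :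
    l.sum.coeff k = (l.map fun q => q.coeff k).sum := by
  induction l using Multiset.induction with
  | empty => simp
  | cons a t ih => simp [Multiset.sum_cons, coeff_add, ih]

theorem eval_multiset_sum' (l : Multiset (Polynomial F)) (x : F) :
    l.sum.eval x = (l.map fun q => q.eval x).sum := by
  induction l using Multiset.induction with
  | empty => simp
  | cons a t ih => simp [Multiset.sum_cons, ih]

theorem coeff_sq_two_mul (g : Polynomial F) (D : ℕ) (hg : g.natDegree ≤ D) :
    (g * g).coeff (2 * D) = g.coeff D * g.coeff D := by
  rcases eq_or_ne g 0 with rfl | hg0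
  · simp
  · rcases lt_or_eq_of_le hg with hlt | heq
    · rw [coeff_eq_zero_of_natDegree_lt hlt,
        coeff_eq_zero_of_natDegree_lt
          (lt_of_le_of_lt (natDegree_mul_le (p := g) (q := g)) (by omega))]
      ring
    · rw [two_mul, ← heq]
      exact coeff_mul_degree_add_degree g g

theorem multiset_sup_mem (m : Multiset ℕ) (h : m.sup ≠ 0) : m.sup ∈ m := by
  induction m using Multiset.induction with
  | empty => simp at h
  | cons a t ih =>
    rw [Multiset.sup_cons] at h ⊢
    rcases eq_or_ne t.sup 0 with h0 | h0
    · rw [h0]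
      have : a ⊔ 0 = a := by simp
      rw [this]
      exact Multiset.mem_cons_self a t
    · rcases le_total a t.sup with hle | hle
      · rw [sup_eq_right.mpr hle]
        exact Multiset.mem_cons_of_mem (ih h0)
      · rw [sup_eq_left.mpr hle]
        exact Multiset.mem_cons_self a t

end PolyHelpers

section MaxField
variable {K Ω : Type*} [Field K] [Field Ω] [Algebra K Ω] [IsAlgClosed Ω]
  [Algebra.IsAlgebraic K Ω] {M : IntermediateField K Ω}

theorem rep_lemma (hmax : ∀ N : IntermediateField K Ω, (¬ IsSumSq (-1 : ↥N)) → M ≤ N → N = M)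
    (α : Ω) (hα : α ∉ M) :
    ∃ l : Multiset (Polynomial ↥M), (∀ g ∈ l, g.degree < (minpoly ↥M α).degree) ∧
      (l.map fun g => (Polynomial.aeval α g) * (Polynomial.aeval α g)).sum = -1 := by
  have hint : IsIntegral ↥M α :=
    ((Algebra.IsAlgebraic.isAlgebraic (R := K) α).isIntegral).tower_top
  set m := minpoly ↥M α with hmdef
  have hm : m.Monic := minpoly.monic hint
  set M' := (IntermediateField.adjoin ↥M ({α} : Set Ω)).restrictScalars K with hM'def
  have hMM' : M ≤ M' := by
    intro x hx
    show x ∈ (IntermediateField.adjoin ↥M ({α} : Set Ω)).restrictScalars K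
    rw [IntermediateField.mem_restrictScalars]
    exact (IntermediateField.adjoin ↥M ({α} : Set Ω)).algebraMap_mem ⟨x, hx⟩
  have hαM' : α ∈ M' := by
    rw [hM'def, IntermediateField.mem_restrictScalars]
    exact IntermediateField.mem_adjoin_simple_self ↥M α
  have hs : IsSumSq (-1 : ↥M') := by
    by_contra hfr
    exact hα ((hmax M' hfr hMM') ▸ hαM')
  have hred : ∀ x : ↥M', ∃ g : Polynomial ↥M,
      g.degree < m.degree ∧ Polynomial.aeval α g = (x : Ω) := by
    intro x
    have hx : (x : Ω) ∈ IntermediateField.adjoin ↥M ({α} : Set Ω) := by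
      rw [← IntermediateField.mem_restrictScalars (K := K)]
      exact x.2
    rw [← IntermediateField.mem_toSubalgebra,
      IntermediateField.adjoin_simple_toSubalgebra_of_isAlgebraic hint.isAlgebraic,
      Algebra.adjoin_singleton_eq_range_aeval, AlgHom.mem_range] at hx
    obtain ⟨g, hg⟩ := hx
    refine ⟨g %ₘ m, Polynomial.degree_modByMonic_lt g hm, ?_⟩
    rw [Polynomial.modByMonic_eq_sub_mul_div g m]
    have h0 : Polynomial.aeval α m = 0 := minpoly.aeval ↥M α
    rw [map_sub, map_mul, h0, zero_mul, sub_zero, hg]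
  have key : ∀ s : ↥M', IsSumSq s → ∃ l : Multiset (Polynomial ↥M),
      (∀ g ∈ l, g.degree < m.degree) ∧
      (l.map fun g => (Polynomial.aeval α g) * (Polynomial.aeval α g)).sum = (s : Ω) := by
    intro s h
    induction h with
    | zero => exact ⟨0, by simp, by simp⟩
    | @sq_add a S _ ih =>
      obtain ⟨l, hdeg, hsum⟩ := ih
      obtain ⟨g, hg, hgev⟩ := hred a
      refine ⟨g ::ₘ l, ?_, ?_⟩
      · intro g' hg'
        rcases Multiset.mem_cons.mp hg' with rfl | hg'
        · exact hg
        · exact hdeg g' hg'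
      · simp only [Multiset.map_cons, Multiset.sum_cons, hsum, hgev]
        push_cast
        ring
  obtain ⟨l, hdeg, hsum⟩ := key (-1) hs
  refine ⟨l, hdeg, ?_⟩
  rw [hsum]
  push_cast
  ring


set_option maxHeartbeats 1000000 in
set_option synthInstance.maxHeartbeats 1000000 in
open Polynomial in
theorem quad_lemma (hM : ¬ IsSumSq (-1 : ↥M))
    (hmax : ∀ N : IntermediateField K Ω, (¬ IsSumSq (-1 : ↥N)) → M ≤ N → N = M)
    (a : ↥M) (ha : ¬ IsSquare a) :
    ∃ p q : ↥M, IsSumSq p ∧ IsSumSq q ∧ a * q = -(1 + p) := by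
  obtain ⟨r, hr⟩ := IsAlgClosed.exists_pow_nat_eq ((a : Ω)) (n := 2) (by norm_num)
  have hr2 : r * r = (a : Ω) := by rw [← hr]; ring
  have hrM : r ∉ M := by
    intro hrm
    exact ha ⟨⟨r, hrm⟩, Subtype.coe_injective hr2.symm⟩
  obtain ⟨l, hdeg, hsum⟩ := rep_lemma hmax r hrM
  have hXa : (X ^ 2 - C a : Polynomial ↥M) ≠ 0 := by
    intro h
    have := congrArg natDegree h
    rw [natDegree_X_pow_sub_C] at this
    simp at this
  have hdvd : minpoly ↥M r ∣ (X ^ 2 - C a : Polynomial ↥M) := by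
    apply minpoly.dvd
    have : (Polynomial.aeval r) (X ^ 2 - C a : Polynomial ↥M) = r ^ 2 - (a : Ω) := by
      simp [Polynomial.aeval_def]
    rw [this, hr]
    ring
  have hdeg2 : (minpoly ↥M r).degree ≤ 2 := by
    refine le_trans (Polynomial.degree_le_of_dvd hdvd hXa) ?_
    rw [Polynomial.degree_X_pow_sub_C (n := 2) (by norm_num) a]
    exact_mod_cast le_rfl
  have hdeg1 : ∀ g ∈ l, g.degree ≤ 1 := by
    intro g hg
    have hlt : g.degree < 2 := lt_of_lt_of_le (hdeg g hg) hdeg2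
    rcases eq_or_ne g 0 with rfl | hg0
    · simp
    · rw [Polynomial.degree_eq_natDegree hg0] at hlt ⊢
      have : g.natDegree < 2 := by exact_mod_cast hlt
      exact_mod_cast Nat.lt_succ_iff.mp this
  have key : ∀ l' : Multiset (Polynomial ↥M), (∀ g ∈ l', g.degree ≤ 1) →
      ∃ p q e : ↥M, IsSumSq p ∧ IsSumSq q ∧
        (l'.map fun g => (Polynomial.aeval r g) * (Polynomial.aeval r g)).sum
          = ((p + a * q : ↥M) : Ω) + ((e : ↥M) : Ω) * r := by
    intro l'
    induction l' using Multiset.induction with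
    | empty =>
      intro _
      refine ⟨0, 0, 0, IsSumSq.zero, IsSumSq.zero, ?_⟩
      simp
    | cons g t ih =>
      intro hd
      obtain ⟨p, q, e, hp, hq, hsum'⟩ := ih fun g' h => hd g' (Multiset.mem_cons_of_mem h)
      have hgle : g.degree ≤ 1 := hd g (Multiset.mem_cons_self g t)
      obtain ⟨c, d, hgeq⟩ : ∃ c d : ↥M, g = C d * X + C c :=
        ⟨g.coeff 0, g.coeff 1, eq_X_add_C_of_degree_le_one hgle⟩
      refine ⟨c * c + p, d * d + q, c * d + c * d + e,
        IsSumSq.sq_add _ hp, IsSumSq.sq_add _ hq, ?_⟩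
      simp only [Multiset.map_cons, Multiset.sum_cons, hsum']
      rw [hgeq]
      simp only [map_add, map_mul, Polynomial.aeval_X, Polynomial.aeval_C,
        show ∀ x : ↥M, algebraMap ↥M Ω x = (x : Ω) from fun _ => rfl]
      push_cast
      linear_combination ((d : Ω) * (d : Ω)) * hr2
  obtain ⟨p, q, e, hp, hq, heq⟩ := key l hdeg1
  rw [hsum] at heq
  by_cases he : e = 0
  · have hcoe : ((p + a * q : ↥M) : Ω) = ((-1 : ↥M) : Ω) := by
      rw [he] at heq
      push_cast at heq ⊢
      linear_combination -heq
    have h2 : p + a * q = -1 := Subtype.coe_injective hcoe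
    exact ⟨p, q, hp, hq, by linear_combination h2⟩
  · exfalso
    apply hrM
    have he' : ((e : Ω)) ≠ 0 := by
      simpa using fun h => he (Subtype.coe_injective (by simpa using h))
    have : r = (((-1 - (p + a * q)) * e⁻¹ : ↥M) : Ω) := by
      have h1 : ((e : Ω)) * ((e : Ω))⁻¹ = 1 := mul_inv_cancel₀ he'
      push_cast at heq ⊢
      linear_combination (-((e : Ω))⁻¹) * heq - r * h1
    rw [this]
    exact SetLike.coe_mem _

theorem sq_total (hM : ¬ IsSumSq (-1 : ↥M))
    (hmax : ∀ N : IntermediateField K Ω, (¬ IsSumSq (-1 : ↥N)) → M ≤ N → N = M)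
    (a : ↥M) : IsSquare a ∨ IsSquare (-a) := by
  by_contra hcon
  push_neg at hcon
  obtain ⟨h1, h2⟩ := hcon
  obtain ⟨p₁, q₁, hp₁, hq₁, he₁⟩ := quad_lemma hM hmax a h1
  obtain ⟨p₂, q₂, hp₂, hq₂, he₂⟩ := quad_lemma hM hmax (-a) h2
  have hq₁0 : q₁ ≠ 0 := by
    intro h
    exact one_add_ne_zero hM hp₁ (by rw [h] at he₁; linear_combination he₁)
  have h1p₂ : IsSumSq (1 + p₂) := by
    have : (1 + p₂ : ↥M) = 1 * 1 + p₂ := by ring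
    rw [this]; exact IsSumSq.sq_add _ hp₂
  have h1p₁ : IsSumSq (1 + p₁) := by
    have : (1 + p₁ : ↥M) = 1 * 1 + p₁ := by ring
    rw [this]; exact IsSumSq.sq_add _ hp₁
  have hx : IsSumSq ((1 + p₂) * q₁) := isSumSq_mul h1p₂ hq₁
  have hy : IsSumSq ((1 + p₁) * q₂) := isSumSq_mul h1p₁ hq₂
  have hsum0 : (1 + p₂) * q₁ + (1 + p₁) * q₂ = 0 := by
    linear_combination q₁ * he₂ + q₂ * he₁
  have hxne : (1 + p₂) * q₁ ≠ 0 := mul_ne_zero (one_add_ne_zero hM hp₂) hq₁0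
  exact add_eq_zero_false hM hx hy hsum0 hxne

theorem isSumSq_isSquare (hM : ¬ IsSumSq (-1 : ↥M))
    (hmax : ∀ N : IntermediateField K Ω, (¬ IsSumSq (-1 : ↥N)) → M ≤ N → N = M)
    {a : ↥M} (h : IsSumSq a) : IsSquare a := by
  rcases sq_total hM hmax a with h' | h'
  · exact h'
  · rcases eq_or_ne a 0 with rfl | ha0
    · exact ⟨0, by simp⟩
    · exfalso
      obtain ⟨b, hb⟩ := h'
      refine add_eq_zero_false hM h (x := a) (y := b * b) ?_ (by linear_combination -hb) ha0
      simpa using IsSumSq.sq_add b IsSumSq.zero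


set_option maxHeartbeats 2000000 in
set_option synthInstance.maxHeartbeats 1000000 in
open Polynomial in
theorem odd_root (hM : ¬ IsSumSq (-1 : ↥M))
    (hmax : ∀ N : IntermediateField K Ω, (¬ IsSumSq (-1 : ↥N)) → M ≤ N → N = M) :
    ∀ p : Polynomial ↥M, Odd p.natDegree → ∃ x : ↥M, p.eval x = 0 := by
  suffices H : ∀ n : ℕ, ∀ p : Polynomial ↥M, p.natDegree = n → Odd n → ∃ x, p.eval x = 0 by
    exact fun p hp => H p.natDegree p rfl hp
  intro n
  induction n using Nat.strong_induction_on with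
  | _ n ih =>
  intro p hdeg hodd
  have hodd' : n % 2 = 1 := Nat.odd_iff.mp hodd
  have hn1 : 1 ≤ n := by omega
  have hp0 : p ≠ 0 := fun h => by rw [h, natDegree_zero] at hdeg; omega
  by_cases hirr : Irreducible p
  · by_cases h1 : n = 1
    · have hdle : p.degree ≤ 1 := by
        rw [degree_eq_natDegree hp0, hdeg, h1]
        exact_mod_cast le_rfl
      have hpeq := eq_X_add_C_of_degree_le_one hdle
      have hc1 : p.coeff 1 ≠ 0 := by
        intro h
        rw [h, map_zero, zero_mul, zero_add] at hpeq
        rw [hpeq, natDegree_C] at hdeg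
        omega
      refine ⟨-(p.coeff 0) / (p.coeff 1), ?_⟩
      conv_lhs => rw [hpeq]
      simp only [eval_add, eval_mul, eval_C, eval_X]
      rw [← hpeq, mul_div_assoc', mul_neg, neg_div, mul_div_cancel_left₀ _ hc1]
      ring
    · exfalso
      have hn2 : 2 ≤ n := by omega
      have hinj : Function.Injective (algebraMap ↥M Ω) := (algebraMap ↥M Ω).injective
      have hdegmap : (p.map (algebraMap ↥M Ω)).degree ≠ 0 := by
        rw [degree_map_eq_of_injective hinj, degree_eq_natDegree hp0, hdeg]
        intro h
        have : n = 0 := by exact_mod_cast h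
        omega
      obtain ⟨α, hαroot⟩ := IsAlgClosed.exists_root _ hdegmap
      have hαev : Polynomial.aeval α p = 0 := by
        rwa [Polynomial.aeval_def, ← Polynomial.eval_map]
      have hαM : α ∉ M := by
        intro hmem
        have heval : p.eval ⟨α, hmem⟩ = 0 := by
          have h2 := hαev
          rw [show α = algebraMap ↥M Ω ⟨α, hmem⟩ from rfl,
            aeval_algebraMap_apply_eq_algebraMap_eval] at h2
          exact hinj (by simpa using h2)
        have hd1 := degree_eq_one_of_irreducible_of_root hirr heval
        rw [degree_eq_natDegree hp0, hdeg] at hd1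
        have : n = 1 := by exact_mod_cast hd1
        omega
      obtain ⟨l, hldeg, hlsum⟩ := rep_lemma hmax α hαM
      have hint : IsIntegral ↥M α :=
        ((Algebra.IsAlgebraic.isAlgebraic (R := K) α).isIntegral).tower_top
      have hm0 : minpoly ↥M α ≠ 0 := minpoly.ne_zero hint
      have hmdvd : minpoly ↥M α ∣ p := minpoly.dvd _ _ hαev
      have hmnu : ¬ IsUnit (minpoly ↥M α) := by
        intro hu
        have h0 := natDegree_eq_zero_of_isUnit hu
        have h1 := minpoly.natDegree_pos hint
        omega
      have hpdvdm : p ∣ minpoly ↥M α := by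
        obtain ⟨c, hc⟩ := hmdvd
        rcases hirr.isUnit_or_isUnit hc with hu | hu
        · exact absurd hu hmnu
        · refine ⟨(hu.unit⁻¹ : Units _), ?_⟩
          rw [hc, mul_assoc]
          simp
      have hmdeg : (minpoly ↥M α).natDegree = n := by
        have h1 := natDegree_le_of_dvd hmdvd hp0
        have h2 := natDegree_le_of_dvd hpdvdm hm0
        omega
      set s : Polynomial ↥M := (l.map fun g => g * g).sum with hsdef
      have hsev : ∀ x : ↥M, IsSumSq (s.eval x) := by
        intro x
        rw [hsdef, eval_multiset_sum', Multiset.map_map]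
        apply Stmt0Aux.isSumSq_iff_multiset.mpr
        refine ⟨l.map fun g => g.eval x, ?_⟩
        rw [Multiset.map_map]
        congr 1
        apply Multiset.map_congr rfl
        intro g _
        simp
      have haevs : Polynomial.aeval α s = -1 := by
        rw [hsdef, map_multiset_sum, Multiset.map_map, ← hlsum]
        congr 1
        apply Multiset.map_congr rfl
        intro g _
        simp
      have haevq : Polynomial.aeval α (1 + s) = 0 := by
        rw [map_add, haevs, map_one]
        ring
      have hq0 : (1 + s) ≠ 0 := by
        intro h
        apply hM
        have hs1 : s.eval 0 = -1 := by
          have : s = -1 := by linear_combination h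
          rw [this]
          simp
        rw [← hs1]
        exact hsev 0
      have hpq : p ∣ (1 + s) := dvd_trans hpdvdm (minpoly.dvd _ _ haevq)
      set D : ℕ := (l.map natDegree).sup with hDdef
      have hgD : ∀ g ∈ l, g.natDegree ≤ D :=
        fun g hg => Multiset.le_sup (Multiset.mem_map_of_mem _ hg)
      have hsD : s.natDegree ≤ 2 * D := by
        apply natDegree_multiset_sum_le'
        intro q hq
        obtain ⟨g, hg, rfl⟩ := Multiset.mem_map.mp hq
        exact le_trans (natDegree_mul_le (p := g) (q := g)) (by have := hgD g hg; omega)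
      have hqd : (1 + s).natDegree ≤ 2 * D := by
        refine le_trans (natDegree_add_le 1 s) ?_
        simp only [natDegree_one]
        omega
      by_cases hD0 : D = 0
      · have h2 := natDegree_le_of_dvd hpq hq0
        rw [hdeg] at h2
        omega
      · obtain ⟨g₀, hg₀l, hg₀D⟩ : ∃ g₀ ∈ l, g₀.natDegree = D := by
          have hmem := multiset_sup_mem (l.map natDegree) (by rw [← hDdef]; exact hD0)
          rw [← hDdef] at hmem
          obtain ⟨g₀, hg₀, hg₀D⟩ := Multiset.mem_map.mp hmem
          exact ⟨g₀, hg₀, hg₀D⟩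
        have hg₀0 : g₀ ≠ 0 := by
          intro h
          rw [h, natDegree_zero] at hg₀D
          exact hD0 hg₀D.symm
        have hcoeffs : s.coeff (2 * D) =
            ((l.map fun g => g.coeff D).map fun x => x * x).sum := by
          rw [hsdef, coeff_multiset_sum', Multiset.map_map, Multiset.map_map]
          congr 1
          apply Multiset.map_congr rfl
          intro g hg
          exact coeff_sq_two_mul g D (hgD g hg)
        have hcoeffne : s.coeff (2 * D) ≠ 0 := by
          rw [hcoeffs]
          refine sq_multiset_sum_ne_zero hM (l := l.map fun g => g.coeff D)
            (x := g₀.coeff D) ?_ ?_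
          · exact Multiset.mem_map_of_mem (fun g => g.coeff D) hg₀l
          · rw [← hg₀D]
            exact mt leadingCoeff_eq_zero.mp hg₀0
        have hsdeg : s.natDegree = 2 * D := le_antisymm hsD (le_natDegree_of_ne_zero hcoeffne)
        have hqcoeff : (1 + s).coeff (2 * D) ≠ 0 := by
          rw [coeff_add, coeff_one, if_neg (by omega : ¬ (2 * D = 0))]
          simpa using hcoeffne
        have hqdeg : (1 + s).natDegree = 2 * D :=
          le_antisymm hqd (le_natDegree_of_ne_zero hqcoeff)
        have hDn : D < n := by
          have hlt := hldeg g₀ hg₀l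
          rw [degree_eq_natDegree hg₀0, hg₀D, degree_eq_natDegree hm0, hmdeg] at hlt
          exact_mod_cast hlt
        obtain ⟨h', hh'⟩ := hpq
        have hh0 : h' ≠ 0 := by
          intro h
          rw [h, mul_zero] at hh'
          exact hq0 hh'
        have hmuldeg : n + h'.natDegree = 2 * D := by
          have h2 : (p * h').natDegree = 2 * D := by rw [← hh', hqdeg]
          rw [natDegree_mul hp0 hh0, hdeg] at h2
          exact h2
        have hhodd : Odd h'.natDegree := by
          rw [Nat.odd_iff]
          omega
        have hhlt : h'.natDegree < n := by omega
        obtain ⟨β, hβ⟩ := ih h'.natDegree hhlt h' rfl hhodd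
        apply hM
        have hevalq : (1 + s).eval β = 0 := by rw [hh', eval_mul, hβ, mul_zero]
        have hsβ : s.eval β = -1 := by
          rw [eval_add, eval_one] at hevalq
          linear_combination hevalq
        rw [← hsβ]
        exact hsev β
  · rw [irreducible_iff] at hirr
    push_neg at hirr
    have hpu : ¬ IsUnit p := by
      intro hu
      have := natDegree_eq_zero_of_isUnit hu
      omega
    obtain ⟨u, v, huv, hu, hv⟩ := hirr hpu
    have hu0 : u ≠ 0 := fun h => hp0 (by rw [huv, h, zero_mul])
    have hv0 : v ≠ 0 := fun h => hp0 (by rw [huv, h, mul_zero])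
    have hun : 1 ≤ u.natDegree := by
      by_contra h
      push_neg at h
      have hdu : u.natDegree = 0 := by omega
      have : u = C (u.coeff 0) := eq_C_of_natDegree_eq_zero hdu
      apply hu
      rw [this]
      apply isUnit_C.mpr
      apply IsUnit.mk0
      intro h0
      rw [h0, map_zero] at this
      exact hu0 this
    have hvn : 1 ≤ v.natDegree := by
      by_contra h
      push_neg at h
      have hdv : v.natDegree = 0 := by omega
      have : v = C (v.coeff 0) := eq_C_of_natDegree_eq_zero hdv
      apply hv
      rw [this]
      apply isUnit_C.mpr
      apply IsUnit.mk0
      intro h0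
      rw [h0, map_zero] at this
      exact hv0 this
    have hsplit : u.natDegree + v.natDegree = n := by
      rw [← natDegree_mul hu0 hv0, ← huv, hdeg]
    rcases Nat.even_or_odd u.natDegree with heu | heu
    · have hvodd : Odd v.natDegree := by
        rw [Nat.even_iff] at heu
        rw [Nat.odd_iff]
        omega
      obtain ⟨x, hx⟩ := ih v.natDegree (by omega) v rfl hvodd
      exact ⟨x, by rw [huv, eval_mul, hx, mul_zero]⟩
    · obtain ⟨x, hx⟩ := ih u.natDegree (by omega) u rfl heu
      exact ⟨x, by rw [huv, eval_mul, hx, zero_mul]⟩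


def maxCone (hM : ¬ IsSumSq (-1 : ↥M))
    (hmax : ∀ N : IntermediateField K Ω, (¬ IsSumSq (-1 : ↥N)) → M ≤ N → N = M) :
    RingCone ↥M where
  carrier := {x | IsSumSq x}
  add_mem' := fun ha hb => ha.add hb
  zero_mem' := IsSumSq.zero
  mul_mem' := fun ha hb => isSumSq_mul ha hb
  one_mem' := by
    have h := IsSumSq.sq_add (1 : ↥M) IsSumSq.zero
    rwa [one_mul, add_zero] at h
  eq_zero_of_mem_of_neg_mem' := fun {a} ha hna => by
    by_contra h0
    exact add_eq_zero_false hM ha hna (by ring) h0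

theorem mem_maxCone (hM : ¬ IsSumSq (-1 : ↥M))
    (hmax : ∀ N : IntermediateField K Ω, (¬ IsSumSq (-1 : ↥N)) → M ≤ N → N = M)
    (x : ↥M) : x ∈ maxCone hM hmax ↔ IsSumSq x := Iff.rfl

theorem isSquare_of_isSumSq' (hM : ¬ IsSumSq (-1 : ↥M))
    (hmax : ∀ N : IntermediateField K Ω, (¬ IsSumSq (-1 : ↥N)) → M ≤ N → N = M)
    (x : ↥M) : IsSquare x → IsSumSq x := by
  rintro ⟨b, rfl⟩
  simpa using IsSumSq.sq_add b IsSumSq.zero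

instance maxConeIsMax (hM : ¬ IsSumSq (-1 : ↥M))
    (hmax : ∀ N : IntermediateField K Ω, (¬ IsSumSq (-1 : ↥N)) → M ≤ N → N = M) :
    HasMemOrNegMem (maxCone hM hmax) where
  mem_or_neg_mem a := by
    rcases sq_total hM hmax a with h | h
    · exact Or.inl (isSquare_of_isSumSq' hM hmax a h)
    · exact Or.inr (isSquare_of_isSumSq' hM hmax (-a) h)

end MaxField

end Stmt0Aux

/-- if `A` is a domain whose fraction field is formally real and every
ring homomorphism from `A` to a real closed field lifts to `B`, then `A → B` is
injective. -/
theorem stmt0 (A B : Type) [CommRing A] [IsDomain A] [CommRing B] [Algebra A B]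
    (hreal : ¬ IsSumSq (-1 : FractionRing A))
    (hlift : ∀ (R : Type) [Field R] [LinearOrder R] [IsStrictOrderedRing R] [IsRealClosedField R] (φ : A →+* R),
      ∃ ψ : B →+* R, ψ.comp (algebraMap A B) = φ) :
    Function.Injective (algebraMap A B) := by
  classical
  set K := FractionRing A with hK
  set Ω := AlgebraicClosure K with hΩ
  obtain ⟨M, hM, hmax⟩ := Stmt0Aux.exists_max_real (K := K) (Ω := Ω) hreal
  haveI := Stmt0Aux.maxConeIsMax hM hmax
  letI lor : LinearOrder ↥M := LinearOrder.mkOfAddGroupCone (Stmt0Aux.maxCone hM hmax)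
  haveI lof : IsOrderedRing ↥M := IsOrderedRing.mkOfCone (Stmt0Aux.maxCone hM hmax)
  haveI : IsStrictOrderedRing ↥M := IsOrderedRing.toIsStrictOrderedRing ↥M
  have hnonneg : ∀ x : ↥M, 0 ≤ x ↔ IsSumSq x := by
    intro x
    constructor
    · intro h
      have h' : x - 0 ∈ Stmt0Aux.maxCone hM hmax := h
      simpa [Stmt0Aux.mem_maxCone] using h'
    · intro h
      show x - 0 ∈ Stmt0Aux.maxCone hM hmax
      simpa [Stmt0Aux.mem_maxCone] using h
  haveI : IsRealClosedField ↥M :=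
    { isSquare_of_nonneg := fun x hx => by
        exact Stmt0Aux.isSumSq_isSquare hM hmax ((hnonneg x).mp (by exact_mod_cast hx))
      exists_root_of_odd := fun p hp => by
        exact Stmt0Aux.odd_root hM hmax p hp }
  set φ : A →+* ↥M := (algebraMap K ↥M).comp (algebraMap A K) with hφ
  have hφinj : Function.Injective φ :=
    (algebraMap K ↥M).injective.comp (IsFractionRing.injective A K)
  obtain ⟨ψ, hψ⟩ := hlift ↥M φ
  intro a b hab
  apply hφinj
  rw [← hψ]
  simp only [RingHom.comp_apply]
  rw [hab]
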